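/- arXiv:2012.06987 — 3 statements merged into one kernel-verified Lean document; each statement's English description precedes it below -/
import Mathlib

section
/- Let N be a finite index set, let p_v ∈ (0,1] for each v ∈ N, and let (S_v)_{v∈N} be independent Bernoulli(p_s) random variables with p_s ∈ (0,1]. With exponent c_l = 1/p_s, the sub-sampled product estimator over-estimates the full product in expectation: ∏_{v∈N} p_v ≤ E[ ∏_{v∈N} p_v^{S_v/p_s} ]. -/
open MeasureTheory ProbabilityTheory Finset

/-- With exponent `c_l = 1/p_s`, the sub-sampled product estimator
over-estimates the full product in expectation:
`∏_{v∈N} p_v ≤ E[ ∏_{v∈N} p_v^{S_v/p_s} ]`. -/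
theorem pollSusceptible_lower_bound
    {Ω : Type*} [MeasurableSpace Ω] (μ : Measure Ω) [IsProbabilityMeasure μ]
    {N : Type*} [Fintype N]
    (p : N → ℝ) (hp : ∀ v, p v ∈ Set.Ioc (0 : ℝ) 1)
    (ps : ℝ) (hps : ps ∈ Set.Ioc (0 : ℝ) 1)
    (S : N → Ω → ℝ)
    (hSmeas : ∀ v, Measurable (S v))
    (hSval : ∀ v ω, S v ω = 0 ∨ S v ω = 1)
    (hSbern : ∀ v, μ {ω | S v ω = 1} = ENNReal.ofReal ps)
    (hindep : iIndepFun S μ) :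
    ∏ v, p v ≤ μ[fun ω => ∏ v, (p v) ^ (S v ω / ps)] := by
  obtain ⟨hps0, hps1⟩ := hps
  -- replace the rpow estimator by an affine function of S
  set h : N → Ω → ℝ := fun v ω => 1 + S v ω * ((p v) ^ (1 / ps) - 1) with hh
  have hgh : ∀ v ω, (p v) ^ (S v ω / ps) = h v ω := by
    intro v ω
    rcases hSval v ω with h0 | h1
    · simp [hh, h0, Real.rpow_zero]
    · simp [hh, h1, one_div]
  have hmeas : ∀ v, Measurable (h v) := by
    intro v
    exact measurable_const.add ((hSmeas v).mul measurable_const)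
  have hSint : ∀ v, Integrable (S v) μ := by
    intro v
    refine (integrable_const (1 : ℝ)).mono' (hSmeas v).aestronglyMeasurable ?_
    filter_upwards with ω
    rcases hSval v ω with h0 | h0 <;> simp [h0]
  have hint : ∀ v, Integrable (h v) μ := by
    intro v
    exact (integrable_const 1).add ((hSint v).mul_const _)
  -- expectation of S v is ps
  have hES : ∀ v, ∫ ω, S v ω ∂μ = ps := by
    intro v
    have hAmeas : MeasurableSet {ω | S v ω = 1} := (hSmeas v) (measurableSet_singleton 1)
    have heq : (fun ω => S v ω) = Set.indicator {ω | S v ω = 1} (1 : Ω → ℝ) := by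
      funext ω
      rcases hSval v ω with h0 | h0
      · have hnm : ω ∉ {ω | S v ω = 1} := by simp [h0]
        simp [Set.indicator_of_notMem hnm, h0]
      · have hm : ω ∈ {ω | S v ω = 1} := h0
        simp [Set.indicator_of_mem hm, h0]
    rw [heq, integral_indicator_one hAmeas, measureReal_def, hSbern v, ENNReal.toReal_ofReal hps0.le]
  have hEh : ∀ v, ∫ ω, h v ω ∂μ = 1 + ps * ((p v) ^ (1 / ps) - 1) := by
    intro v
    rw [hh]
    simp only
    rw [integral_add (integrable_const 1) ((hSint v).mul_const _), integral_const,
      integral_mul_const, hES v]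
    simp
  -- independence of the h family and product formula
  have hindep' : iIndepFun h μ := by
    refine hindep.comp (g := fun v x => 1 + x * ((p v) ^ (1 / ps) - 1)) ?_
    intro v
    exact measurable_const.add (measurable_id.mul measurable_const)
  have hprod : ∀ s : Finset N,
      ∫ ω, ∏ v ∈ s, h v ω ∂μ = ∏ v ∈ s, ∫ ω, h v ω ∂μ := by
    intro s
    induction s using Finset.cons_induction with
    | empty => simp
    | cons i s hi ih =>
      have hIF : IndepFun (∏ j ∈ s, h j) (h i) μ :=
        hindep'.indepFun_finsetProd_of_notMem hmeas hi
      have hpr : (∏ j ∈ s, h j) = fun ω => ∏ j ∈ s, h j ω := by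
        funext ω; simp
      have hm1 : AEStronglyMeasurable (∏ j ∈ s, h j) μ := by
        rw [hpr]
        exact (Finset.measurable_prod s fun j _ => hmeas j).aestronglyMeasurable
      have hmul := hIF.integral_mul_eq_mul_integral hm1 (hmeas i).aestronglyMeasurable
      simp only [Finset.prod_apply] at hmul
      simp only [Finset.prod_cons]
      calc ∫ ω, h i ω * ∏ v ∈ s, h v ω ∂μ
          = ∫ ω, (∏ v ∈ s, h v ω) * h i ω ∂μ := by
            congr 1; funext ω; ring
        _ = (∫ ω, ∏ v ∈ s, h v ω ∂μ) * ∫ ω, h i ω ∂μ := by rw [hpr] at hmul; exact hmul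
        _ = (∫ ω, h i ω ∂μ) * ∏ v ∈ s, ∫ ω, h v ω ∂μ := by rw [ih]; ring
  -- pointwise bound p v ≤ E[h v]
  have hterm : ∀ v, p v ≤ 1 + ps * ((p v) ^ (1 / ps) - 1) := by
    intro v
    obtain ⟨hp0, hp1⟩ := hp v
    have hkey := Real.geom_mean_le_arith_mean2_weighted
      (w₁ := 1 - ps) (w₂ := ps) (p₁ := 1) (p₂ := (p v) ^ (1 / ps))
      (by linarith) hps0.le zero_le_one (Real.rpow_nonneg hp0.le _) (by ring)
    have hL : (1:ℝ) ^ (1 - ps) * ((p v) ^ (1 / ps)) ^ ps = p v := by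
      rw [Real.one_rpow, one_mul, ← Real.rpow_mul hp0.le, one_div,
        inv_mul_cancel₀ hps0.ne', Real.rpow_one]
    rw [hL] at hkey
    nlinarith [hkey]
  calc ∏ v, p v ≤ ∏ v, (1 + ps * ((p v) ^ (1 / ps) - 1)) := by
        refine Finset.prod_le_prod (fun v _ => (hp v).1.le) (fun v _ => hterm v)
    _ = ∏ v, ∫ ω, h v ω ∂μ := by
        refine Finset.prod_congr rfl fun v _ => (hEh v).symm
    _ = ∫ ω, ∏ v, h v ω ∂μ := (hprod Finset.univ).symm
    _ = μ[fun ω => ∏ v, (p v) ^ (S v ω / ps)] := by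
        congr 1
        funext ω
        exact (Finset.prod_congr rfl fun v _ => (hgh v ω).symm)
end

section
/- Let N be a finite index set, let p_min ∈ (0,1), let p_v ∈ [p_min,1] for each v ∈ N, and let (S_v)_{v∈N} be independent Bernoulli(p_s) random variables with p_s ∈ (0,1]. Assume p_s ≥ √(−log(p_min)/2) and let c_u > 0 satisfy c_u·p_s + c_u²·log(p_min)/8 = 1. Then the sub-sampled product estimator with exponent c_u under-estimates the full product in expectation: E[ ∏_{v∈N} p_v^{c_u·S_v} ] ≤ ∏_{v∈N} p_v. -/
open MeasureTheory ProbabilityTheory Finset Real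

lemma hoeff_scalar (q : ℝ) (hq0 : 0 ≤ q) (hq1 : q ≤ 1) (l : ℝ) (hl : l ≤ 0) :
    1 - q + q * exp l ≤ exp (q * l + l ^ 2 / 8) := by
  set D : ℝ → ℝ := fun x => 1 - q + q * exp x with hD
  have hDpos : ∀ x, 0 < D x := by
    intro x
    have hx : D x = 1 - q + q * exp x := rfl
    rw [hx]
    have F1 := exp_pos x
    have F2 : 0 ≤ q * exp x := mul_nonneg hq0 F1.le
    have F3 : 0 ≤ (1 - q) * exp x := mul_nonneg (by linarith) F1.le
    nlinarith [F1, F2, F3]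
  have hDderiv : ∀ x, HasDerivAt D (q * exp x) x := by
    intro x
    exact ((Real.hasDerivAt_exp x).const_mul q).const_add (1 - q)
  set f : ℝ → ℝ := fun x => q * x + x ^ 2 / 8 - Real.log (D x) with hf
  set g : ℝ → ℝ := fun x => q + x / 4 - q * exp x / D x with hg
  have hfderiv : ∀ x, HasDerivAt f (g x) x := by
    intro x
    have h1 : HasDerivAt (fun x : ℝ => q * x + x ^ 2 / 8) (q + x / 4) x := by
      have := ((hasDerivAt_pow 2 x).div_const 8).const_add (q * x)
      have h2 : HasDerivAt (fun y : ℝ => q * y) q x := by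
        simpa using (hasDerivAt_id x).const_mul q
      have h4 := h2.add ((hasDerivAt_pow 2 x).div_const 8)
      exact h4.congr_deriv (by rw [show (2:ℕ) - 1 = 1 from rfl]; push_cast; ring)
    have h3 : HasDerivAt (fun x => Real.log (D x)) (q * exp x / D x) x :=
      (hDderiv x).log (hDpos x).ne'
    exact h1.sub h3
  have hgderiv : ∀ x, HasDerivAt g (1 / 4 - q * exp x * (1 - q) / (D x) ^ 2) x := by
    intro x
    have h1 : HasDerivAt (fun x : ℝ => q + x / 4) (1 / 4) x := by
      simpa using ((hasDerivAt_id x).div_const 4).const_add q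
    have h2 : HasDerivAt (fun x => q * exp x) (q * exp x) x :=
      (Real.hasDerivAt_exp x).const_mul q
    have h3 : HasDerivAt (fun x => q * exp x / D x)
        ((q * exp x * D x - q * exp x * (q * exp x)) / (D x) ^ 2) x :=
      h2.div (hDderiv x) (hDpos x).ne'
    have heq : (q * exp x * D x - q * exp x * (q * exp x)) / (D x) ^ 2
        = q * exp x * (1 - q) / (D x) ^ 2 := by
      simp only [hD]; ring
    rw [heq] at h3
    exact h1.sub h3
  have hgmono : Monotone g := by
    apply monotone_of_deriv_nonneg (fun x => (hgderiv x).differentiableAt)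
    intro x
    rw [(hgderiv x).deriv]
    have hsq : 0 ≤ ((1 - q) - q * exp x) ^ 2 := sq_nonneg _
    have hDx : D x = (1 - q) + q * exp x := rfl
    have h4 : 4 * (q * exp x * (1 - q)) ≤ (D x) ^ 2 := by
      rw [hDx]; nlinarith [hsq]
    have hD2 : 0 < (D x) ^ 2 := pow_pos (hDpos x) 2
    rw [sub_nonneg, div_le_iff₀ hD2]
    linarith
  have hg0 : g 0 = 0 := by
    simp only [hg, hD]
    norm_num
  have hgle : ∀ x ≤ 0, g x ≤ 0 := fun x hx => hg0 ▸ hgmono hx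
  have hfanti : AntitoneOn f (Set.Iic 0) := by
    apply antitoneOn_of_deriv_nonpos (convex_Iic 0)
    · exact fun x _ => ((hfderiv x).differentiableAt).continuousAt.continuousWithinAt
    · exact fun x _ => ((hfderiv x).differentiableAt).differentiableWithinAt
    · intro x hx
      rw [(hfderiv x).deriv]
      exact hgle x (le_of_lt (by simpa using hx))
  have hf0 : f 0 = 0 := by simp [hf, hD]
  have hfl : 0 ≤ f l := by
    have := hfanti (Set.mem_Iic.2 hl) (Set.mem_Iic.2 le_rfl) hl
    rw [hf0] at this; exact this
  have : Real.log (D l) ≤ q * l + l ^ 2 / 8 := by simp only [hf] at hfl; linarith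
  calc D l = exp (Real.log (D l)) := (exp_log (hDpos l)).symm
    _ ≤ exp (q * l + l ^ 2 / 8) := exp_le_exp.2 this

lemma term_le (pmin ps cu x : ℝ) (hpmin : pmin ∈ Set.Ioo (0:ℝ) 1)
    (hx : x ∈ Set.Icc pmin 1) (hps0 : 0 < ps) (hps1 : ps ≤ 1) (hcu_pos : 0 < cu)
    (hcu : cu * ps + cu ^ 2 * Real.log pmin / 8 = 1) :
    1 - ps + ps * x ^ cu ≤ x := by
  have hx0 : 0 < x := lt_of_lt_of_le hpmin.1 hx.1
  set t := Real.log x with hts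
  have ht0 : t ≤ 0 := Real.log_nonpos hx0.le hx.2
  have htL : Real.log pmin ≤ t := Real.log_le_log hpmin.1 hx.1
  have hrpow : x ^ cu = exp (cu * t) := by
    rw [Real.rpow_def_of_pos hx0, mul_comm]
  have hct : cu * t ≤ 0 := mul_nonpos_of_nonneg_of_nonpos hcu_pos.le ht0
  have hH := hoeff_scalar ps hps0.le hps1 (cu * t) hct
  have h2 : t - (ps * (cu * t) + (cu * t) ^ 2 / 8)
      = (cu ^ 2 / 8) * (-t) * (t - Real.log pmin) := by
    linear_combination (-t) * hcu
  have hnn : 0 ≤ (cu ^ 2 / 8) * (-t) * (t - Real.log pmin) :=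
    mul_nonneg (mul_nonneg (by positivity) (by linarith)) (by linarith)
  have hexp : ps * (cu * t) + (cu * t) ^ 2 / 8 ≤ t := by linarith
  calc 1 - ps + ps * x ^ cu = 1 - ps + ps * exp (cu * t) := by rw [hrpow]
    _ ≤ exp (ps * (cu * t) + (cu * t) ^ 2 / 8) := hH
    _ ≤ exp t := exp_le_exp.2 hexp
    _ = x := Real.exp_log hx0

/-- With exponent `c_u` solving `c_u p_s + c_u² log(p_min)/8 = 1`,
and `p_s ≥ √(−log p_min / 2)`, the sub-sampled product estimator under-estimates
the full product in expectation. -/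
theorem pollSusceptible_upper_bound
    {Ω : Type*} [MeasurableSpace Ω] (μ : Measure Ω) [IsProbabilityMeasure μ]
    {N : Type*} [Fintype N]
    (pmin : ℝ) (hpmin : pmin ∈ Set.Ioo (0 : ℝ) 1)
    (p : N → ℝ) (hp : ∀ v, p v ∈ Set.Icc pmin 1)
    (ps : ℝ) (hps : ps ∈ Set.Ioc (0 : ℝ) 1)
    (hps_large : ps ≥ Real.sqrt (-Real.log pmin / 2))
    (cu : ℝ) (hcu_pos : 0 < cu)
    (hcu : cu * ps + cu ^ 2 * Real.log pmin / 8 = 1)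
    (S : N → Ω → ℝ)
    (hSmeas : ∀ v, Measurable (S v))
    (hSval : ∀ v ω, S v ω = 0 ∨ S v ω = 1)
    (hSbern : ∀ v, μ {ω | S v ω = 1} = ENNReal.ofReal ps)
    (hindep : iIndepFun S μ) :
    μ[fun ω => ∏ v, (p v) ^ (cu * S v ω)] ≤ ∏ v, p v := by
  classical
  have hpv_pos : ∀ v, 0 < p v := fun v => lt_of_lt_of_le hpmin.1 (hp v).1
  set Y : N → Ω → ℝ := fun v ω => (cu * Real.log (p v)) * S v ω with hY
  have hYmeas : ∀ v, Measurable (Y v) := fun v => (hSmeas v).const_mul _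
  have hYindep : iIndepFun Y μ :=
    hindep.comp (fun v => fun x : ℝ => (cu * Real.log (p v)) * x)
      (fun v => measurable_id.const_mul _)
  have hre : (fun ω => ∏ v, (p v) ^ (cu * S v ω)) = fun ω => exp (1 * (∑ v, Y v) ω) := by
    funext ω
    rw [one_mul, Finset.sum_apply, Real.exp_sum]
    refine Finset.prod_congr rfl fun v _ => ?_
    rw [Real.rpow_def_of_pos (hpv_pos v)]
    congr 1
    simp only [hY]
    ring
  have hint : ∀ v, mgf (Y v) μ 1 = 1 - ps + ps * (p v) ^ cu := by
    intro v
    have hA : MeasurableSet {ω | S v ω = 1} := hSmeas v (measurableSet_singleton 1)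
    have hpe : exp (cu * Real.log (p v)) = (p v) ^ cu := by
      rw [Real.rpow_def_of_pos (hpv_pos v), mul_comm]
    have hfun : (fun ω => exp (1 * Y v ω))
        = fun ω => 1 + ((p v) ^ cu - 1) * Set.indicator {ω | S v ω = 1} (fun _ => (1:ℝ)) ω := by
      funext ω
      rcases hSval v ω with h | h
      · simp [hY, h, Set.indicator_apply, Set.mem_setOf_eq]
      · simp [hY, h, Set.indicator_apply, Set.mem_setOf_eq, hpe]
    have hind : Integrable (Set.indicator {ω | S v ω = 1} (fun _ => (1:ℝ))) μ :=
      (integrable_const (1:ℝ)).indicator hA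
    rw [mgf, hfun, integral_add (integrable_const 1) (hind.const_mul _),
      integral_const, integral_const_mul, integral_indicator_const _ hA]
    simp [measureReal_def, hSbern v, ENNReal.toReal_ofReal hps.1.le]
    ring
  calc μ[fun ω => ∏ v, (p v) ^ (cu * S v ω)] = mgf (∑ v, Y v) μ 1 := by rw [hre]; rfl
    _ = ∏ v, mgf (Y v) μ 1 := hYindep.mgf_sum hYmeas Finset.univ
    _ ≤ ∏ v, p v := by
        refine Finset.prod_le_prod (fun v _ => mgf_nonneg) (fun v _ => ?_)
        rw [hint v]
        exact term_le pmin ps cu (p v) hpmin (hp v) hps.1 hps.2 hcu_pos hcu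
end

section
/- Let E be a finite set of directed edges with weights w_e ≥ 0, let p_s ∈ (0,1] and p_init ∈ [0,1], and suppose each node u carries a sampling indicator S_u ~ Bernoulli(p_s) and an initial-infection indicator I_u ~ Bernoulli(p_init), with all indicators across all nodes mutually independent. For each edge e = (u,v) define Ẑ_e = w_e if S_u = S_v = 1, I_u = 1 and I_v = 0, and Ẑ_e = 0 otherwise. Then E[ (1/p_s²)·∑_{e∈E} Ẑ_e ] = ∑_{(u,v)∈E} p_init·(1 − p_init)·w_{u,v}, i.e., (1/p_s²)·∑_e Ẑ_e is an unbiased estimator of the expected total weight e_c^t of the edges crossing the random initial-infection cut of the full contact network. -/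
open MeasureTheory ProbabilityTheory Finset

/-- `(1/p_s²)·∑_{e∈E} Ẑ_e` is an unbiased estimator of the
expected cut weight `e_c^t = ∑_{(u,v)∈E} p_init·(1 − p_init)·w_{u,v}`. -/
theorem pollSpreader_unbiased
    {Ω : Type*} [MeasurableSpace Ω] (μ : Measure Ω) [IsProbabilityMeasure μ]
    {V : Type*}
    (E : Finset (V × V)) (hE : ∀ e ∈ E, e.1 ≠ e.2)
    (w : V × V → ℝ) (hw : ∀ e ∈ E, 0 ≤ w e)
    (ps : ℝ) (hps : ps ∈ Set.Ioc (0 : ℝ) 1)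
    (pinit : ℝ) (hpinit : pinit ∈ Set.Icc (0 : ℝ) 1)
    (S I : V → Ω → ℝ)
    (hSmeas : ∀ u, Measurable (S u)) (hImeas : ∀ u, Measurable (I u))
    (hSval : ∀ u ω, S u ω = 0 ∨ S u ω = 1)
    (hIval : ∀ u ω, I u ω = 0 ∨ I u ω = 1)
    (hSbern : ∀ u, μ {ω | S u ω = 1} = ENNReal.ofReal ps)
    (hIbern : ∀ u, μ {ω | I u ω = 1} = ENNReal.ofReal pinit)
    (hindep : iIndepFun (Sum.elim S I) μ) :
    μ[fun ω => (1 / ps ^ 2) *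
        ∑ e ∈ E, (if S e.1 ω = 1 ∧ S e.2 ω = 1 ∧ I e.1 ω = 1 ∧ I e.2 ω = 0
          then w e else 0)] =
      ∑ e ∈ E, pinit * (1 - pinit) * w e := by
  classical
  obtain ⟨hps0, hps1⟩ := hps
  obtain ⟨hpi0, hpi1⟩ := hpinit
  set A : V × V → Set Ω := fun e =>
    {ω | S e.1 ω = 1 ∧ S e.2 ω = 1 ∧ I e.1 ω = 1 ∧ I e.2 ω = 0} with hA
  have hAeq : ∀ e : V × V,
      A e = (S e.1 ⁻¹' {1}) ∩ ((S e.2 ⁻¹' {1}) ∩ ((I e.1 ⁻¹' {1}) ∩ (I e.2 ⁻¹' {0}))) := by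
    intro e; ext ω; simp [hA]
  have hAmeas : ∀ e : V × V, MeasurableSet (A e) := by
    intro e
    rw [hAeq]
    exact ((hSmeas e.1) (measurableSet_singleton 1)).inter
      (((hSmeas e.2) (measurableSet_singleton 1)).inter
      (((hImeas e.1) (measurableSet_singleton 1)).inter
      ((hImeas e.2) (measurableSet_singleton 0))))
  -- measure of A e
  have hmeasA : ∀ e ∈ E, μ (A e) =
      ENNReal.ofReal ps * (ENNReal.ofReal ps *
        (ENNReal.ofReal pinit * ENNReal.ofReal (1 - pinit))) := by
    intro e he
    have huv : e.1 ≠ e.2 := hE e he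
    set u := e.1
    set v := e.2
    set t : Finset (V ⊕ V) := {Sum.inl u, Sum.inl v, Sum.inr u, Sum.inr v} with ht
    set sets : V ⊕ V → Set ℝ := fun i => if i = Sum.inr v then {0} else {1} with hsets
    have hms : ∀ i ∈ t, MeasurableSet (sets i) := by
      intro i _
      by_cases h : i = Sum.inr v <;> simp [hsets, h]
    have hkey := hindep.measure_inter_preimage_eq_mul t hms
    have hinter : (⋂ i ∈ t, (Sum.elim S I i) ⁻¹' sets i) = A e := by
      ext ω
      simp only [ht, Finset.mem_insert, Finset.mem_singleton, Set.mem_iInter, Set.mem_preimage]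
      constructor
      · intro h
        have h1 := h (Sum.inl u) (by tauto)
        have h2 := h (Sum.inl v) (by tauto)
        have h3 := h (Sum.inr u) (by tauto)
        have h4 := h (Sum.inr v) (by tauto)
        simp [hsets, huv] at h1 h2 h3 h4
        exact ⟨h1, h2, h3, h4⟩
      · rintro ⟨h1, h2, h3, h4⟩ i hi
        rcases hi with hi | hi | hi | hi <;> subst hi <;> simp [hsets, huv, u, v, h1, h2, h3, h4]
    have hnotmem1 : (Sum.inl u : V ⊕ V) ∉ ({Sum.inl v, Sum.inr u, Sum.inr v} : Finset (V ⊕ V)) := by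
      simp [huv]
    have hnotmem2 : (Sum.inl v : V ⊕ V) ∉ ({Sum.inr u, Sum.inr v} : Finset (V ⊕ V)) := by simp
    have hnotmem3 : (Sum.inr u : V ⊕ V) ∉ ({Sum.inr v} : Finset (V ⊕ V)) := by simp [huv]
    have hprod : ∏ i ∈ t, μ ((Sum.elim S I i) ⁻¹' sets i) =
        μ (S u ⁻¹' {1}) * (μ (S v ⁻¹' {1}) * (μ (I u ⁻¹' {1}) * μ (I v ⁻¹' {0}))) := by
      rw [ht, Finset.prod_insert hnotmem1, Finset.prod_insert hnotmem2,
        Finset.prod_insert hnotmem3, Finset.prod_singleton]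
      simp [hsets, huv]
    have hS1 : ∀ x, μ (S x ⁻¹' {1}) = ENNReal.ofReal ps := by
      intro x
      have : S x ⁻¹' {1} = {ω | S x ω = 1} := by ext ω; simp
      rw [this, hSbern]
    have hI1 : μ (I u ⁻¹' {1}) = ENNReal.ofReal pinit := by
      have : I u ⁻¹' {1} = {ω | I u ω = 1} := by ext ω; simp
      rw [this, hIbern]
    have hI0 : μ (I v ⁻¹' {0}) = ENNReal.ofReal (1 - pinit) := by
      have hc : I v ⁻¹' {0} = {ω | I v ω = 1}ᶜ := by
        ext ω
        rcases hIval v ω with h | h <;> simp [h]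
      rw [hc, measure_compl ((hImeas v) (measurableSet_singleton 1) |>.congr (by ext ω; simp))
        (measure_ne_top μ _), hIbern, measure_univ,
        ← ENNReal.ofReal_one, ← ENNReal.ofReal_sub _ hpi0]
    rw [← hinter, hkey, hprod, hS1, hS1, hI1, hI0]
  -- each summand's integral
  have hint : ∀ e ∈ E, ∫ ω, (if S e.1 ω = 1 ∧ S e.2 ω = 1 ∧ I e.1 ω = 1 ∧ I e.2 ω = 0
      then w e else 0) ∂μ = ps * ps * (pinit * (1 - pinit)) * w e := by
    intro e he
    have hfun : (fun ω => if S e.1 ω = 1 ∧ S e.2 ω = 1 ∧ I e.1 ω = 1 ∧ I e.2 ω = 0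
        then w e else 0) = (A e).indicator (fun _ => w e) := by
      ext ω; simp [hA, Set.indicator_apply]
    rw [hfun, integral_indicator_const _ (hAmeas e), measureReal_def, hmeasA e he]
    have h1 : (0:ℝ) ≤ 1 - pinit := by linarith
    rw [ENNReal.toReal_mul, ENNReal.toReal_mul, ENNReal.toReal_mul,
      ENNReal.toReal_ofReal hps0.le, ENNReal.toReal_ofReal hpi0,
      ENNReal.toReal_ofReal h1, smul_eq_mul]
    ring
  -- integrability
  have hinteg : ∀ e ∈ E, Integrable (fun ω =>
      if S e.1 ω = 1 ∧ S e.2 ω = 1 ∧ I e.1 ω = 1 ∧ I e.2 ω = 0 then w e else 0) μ := by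
    intro e _
    have hfun : (fun ω => if S e.1 ω = 1 ∧ S e.2 ω = 1 ∧ I e.1 ω = 1 ∧ I e.2 ω = 0
        then w e else 0) = (A e).indicator (fun _ => w e) := by
      ext ω; simp [hA, Set.indicator_apply]
    rw [hfun]
    exact (integrable_const (w e)).indicator (hAmeas e)
  rw [integral_const_mul, integral_finset_sum E hinteg, Finset.mul_sum]
  refine Finset.sum_congr rfl fun e he => ?_
  rw [hint e he]
  have : ps ≠ 0 := ne_of_gt hps0
  field_simp
end
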